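/- Let Y be an n×n matrix (over a commutative ring, or with real entries) such that Y^k = 0 for some positive integer k, and define Z = I + Σ_{j=1}^{k-1} binom(1/2, j) Y^j (generalized binomial coefficients). Then Z^2 = I + Y. -/

import Mathlib

/-- The generalized binomial coefficient `(1/2 choose j)`. -/
noncomputable def halfChoose (j : ℕ) : ℝ :=
  (∏ i ∈ Finset.range j, ((1 : ℝ) / 2 - i)) / (Nat.factorial j)

lemma halfChoose_eq_ringChoose (j : ℕ) : halfChoose j = Ring.choose (1 / 2 : ℝ) j := by
  have hP : (descPochhammer ℝ j).eval (1 / 2 : ℝ)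
      = ∏ i ∈ Finset.range j, ((1 : ℝ) / 2 - i) := by
    induction j with
    | zero => simp
    | succ m ih =>
      rw [descPochhammer_succ_eval, ih, Finset.prod_range_succ]
  have hs : Polynomial.smeval (descPochhammer ℤ j) (1 / 2 : ℝ)
      = (descPochhammer ℝ j).eval (1 / 2 : ℝ) := by
    rw [Polynomial.descPochhammer_smeval_eq_ascPochhammer,
      Polynomial.ascPochhammer_smeval_eq_eval,
      descPochhammer_eval_eq_ascPochhammer]
  have h := Ring.descPochhammer_eq_factorial_smul_choose (R := ℝ) (1 / 2 : ℝ) j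
  rw [hs, hP] at h
  have hfac : ((Nat.factorial j : ℝ)) ≠ 0 := by
    exact_mod_cast Nat.factorial_ne_zero j
  rw [nsmul_eq_mul] at h
  rw [halfChoose, h]
  field_simp

lemma halfChoose_conv (m : ℕ) :
    ∑ ij ∈ Finset.HasAntidiagonal.antidiagonal m, halfChoose ij.1 * halfChoose ij.2
      = (Nat.choose 1 m : ℝ) := by
  have h := Ring.add_choose_eq (r := (1 / 2 : ℝ)) (s := (1 / 2 : ℝ)) m (Commute.all _ _)
  have h1 : (1 / 2 : ℝ) + 1 / 2 = ((1 : ℕ) : ℝ) := by norm_num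
  rw [h1, Ring.choose_natCast] at h
  rw [show (∑ ij ∈ Finset.HasAntidiagonal.antidiagonal m, halfChoose ij.1 * halfChoose ij.2)
      = ∑ ij ∈ Finset.HasAntidiagonal.antidiagonal m, Ring.choose (1/2:ℝ) ij.1 * Ring.choose (1/2:ℝ) ij.2 from
    Finset.sum_congr rfl fun ij _ => by
      rw [halfChoose_eq_ringChoose, halfChoose_eq_ringChoose]]
  exact h.symm

/-- If `Y` is an `n × n` real matrix with `Y ^ k = 0` and
`Z = I + ∑_{j=1}^{k-1} (1/2 choose j) Y^j`, then `Z ^ 2 = I + Y`. -/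
theorem square_root_of_unipotent {n k : ℕ} (hk : 0 < k)
    (Y : Matrix (Fin n) (Fin n) ℝ) (hY : Y ^ k = 0)
    (Z : Matrix (Fin n) (Fin n) ℝ)
    (hZ : Z = 1 + ∑ j ∈ Finset.Icc 1 (k - 1), halfChoose j • Y ^ j) :
    Z ^ 2 = 1 + Y := by
  classical
  set p : Polynomial ℝ := ∑ j ∈ Finset.range k, Polynomial.C (halfChoose j) * Polynomial.X ^ j
    with hp
  -- coefficients of p
  have hcoeff : ∀ m, m < k → p.coeff m = halfChoose m := by
    intro m hm
    rw [hp, Polynomial.finset_sum_coeff]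
    rw [Finset.sum_eq_single m]
    · simp
    · intro j _ hj
      simp [Polynomial.coeff_C_mul, Polynomial.coeff_X_pow, Ne.symm hj]
    · intro hmem
      exact absurd (Finset.mem_range.mpr hm) hmem
  -- Z = aeval Y p
  have hIcc : Finset.Icc 1 (k - 1) = Finset.Ico 1 k := by
    ext j; simp only [Finset.mem_Icc, Finset.mem_Ico]; omega
  have hZa : Z = Polynomial.aeval Y p := by
    rw [hp, map_sum, hZ]
    have hr : Finset.range k = insert 0 (Finset.Ico 1 k) := by
      ext j; simp only [Finset.mem_range, Finset.mem_insert, Finset.mem_Ico]; omega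
    rw [hr, Finset.sum_insert (by simp)]
    simp only [map_mul, map_pow, Polynomial.aeval_C, Polynomial.aeval_X]
    have h0 : halfChoose 0 = 1 := by simp [halfChoose]
    rw [hIcc]
    congr 1
    · simp [h0, Algebra.algebraMap_eq_smul_one]
    · refine Finset.sum_congr rfl fun j _ => ?_
      rw [Algebra.smul_def, Algebra.algebraMap_eq_smul_one]
  -- p^2 ≡ 1 + X mod X^k
  have hdvd : Polynomial.X ^ k ∣ p ^ 2 - (1 + Polynomial.X) := by
    rw [Polynomial.X_pow_dvd_iff]
    intro m hm
    rw [Polynomial.coeff_sub, sq, Polynomial.coeff_mul]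
    have hconv : ∑ ij ∈ Finset.HasAntidiagonal.antidiagonal m, p.coeff ij.1 * p.coeff ij.2
        = (Nat.choose 1 m : ℝ) := by
      rw [← halfChoose_conv m]
      refine Finset.sum_congr rfl fun ij hij => ?_
      have h := Finset.HasAntidiagonal.mem_antidiagonal.mp hij
      rw [hcoeff ij.1 (by omega), hcoeff ij.2 (by omega)]
    rw [hconv, Polynomial.coeff_add, Polynomial.coeff_one, Polynomial.coeff_X]
    rcases m with _ | _ | m
    · norm_num
    · norm_num
    · have : Nat.choose 1 (m + 2) = 0 := Nat.choose_eq_zero_of_lt (by omega)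
      simp [this]
  obtain ⟨q, hq⟩ := hdvd
  have hpq : p ^ 2 = 1 + Polynomial.X + Polynomial.X ^ k * q := by
    rw [← hq]; ring
  calc Z ^ 2 = Polynomial.aeval Y (p ^ 2) := by rw [hZa, map_pow]
    _ = 1 + Y + Y ^ k * Polynomial.aeval Y q := by
        rw [hpq]; simp [map_add, map_mul, map_pow]
    _ = 1 + Y := by rw [hY]; simp
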